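/- The Taylor expansion at t = 0 of the function t ↦ Ω⋆(t² − 2) + t² − 2 begins (4/(3π))t³ + (1/(30π))t⁵ + (3/(1120π))t⁷ + O(t⁹). -/

import Mathlib

open Real Set Filter Asymptotics Topology

lemma aux_alg (s q R x : ℝ) (hs0 : 0 < s) (hsge : 1/2 ≤ s) (hq1 : 1 ≤ q)
    (hkey : (1 - s*q)*(1 + s*q) = R) (hR0 : 0 ≤ R) (hRle : R ≤ x^8)
    (h18 : x^8 ≤ x^6/4) : |1/s - q| ≤ 2 * x^6 := by
  have hx6 : (0:ℝ) ≤ x^6 := by positivity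
  have hsq0 : (0:ℝ) ≤ s*q := by nlinarith
  have hsq1 : 1 ≤ 1 + s*q := by nlinarith
  have hnum : 0 ≤ 1 - s*q := by nlinarith
  have hnum2 : 1 - s*q ≤ x^8 := by nlinarith [mul_nonneg hnum hsq0]
  have heq : 1/s - q = (1 - s*q)/s := by field_simp
  rw [heq, abs_of_nonneg (by positivity)]
  rw [div_le_iff₀ hs0]
  nlinarith [mul_le_mul_of_nonneg_left hsge hx6]

lemma invsqrt_bound (x : ℝ) (hx : |x| ≤ 1/2) :
    |1 / Real.sqrt (1 - x^2) - (1 + x^2/2 + 3*x^4/8 + 5*x^6/16)| ≤ 2 * x^6 := by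
  have hx' := abs_le.mp hx
  have hx2 : x^2 ≤ 1/4 := by nlinarith [hx'.1, hx'.2]
  have h1 : (0:ℝ) < 1 - x^2 := by nlinarith
  have hs0 : 0 < Real.sqrt (1 - x^2) := Real.sqrt_pos.mpr h1
  have hs2 : (Real.sqrt (1 - x^2))^2 = 1 - x^2 := Real.sq_sqrt h1.le
  refine aux_alg _ _ (x^8*(35/64 + 7/32*x^2 + 35/256*x^4 + 25/256*x^6)) x hs0
    (by nlinarith) (by nlinarith [sq_nonneg x, sq_nonneg (x^2), sq_nonneg (x^3)])
    (by linear_combination (-(1 + x^2/2 + 3*x^4/8 + 5*x^6/16)^2) * hs2)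
    (by positivity) ?_ ?_
  · nlinarith [pow_nonneg (sq_nonneg x) 4, sq_nonneg x, sq_nonneg (x^2), sq_nonneg (x^3),
      pow_le_pow_left₀ (sq_nonneg x) hx2 3]
  · nlinarith [pow_nonneg (sq_nonneg x) 3, pow_le_pow_left₀ (sq_nonneg x) hx2 1,
      mul_le_mul_of_nonneg_left hx2 (pow_nonneg (sq_nonneg x) 3)]

lemma arcsin_taylor_bound (u : ℝ) (hu : u ∈ Icc (0:ℝ) (1/2)) :
    |Real.arcsin u - (u + u^3/6 + 3*u^5/40 + 5*u^7/112)| ≤ 2 * u^7 := by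
  obtain ⟨hu0, hu2⟩ := hu
  set h : ℝ → ℝ := fun x => Real.arcsin x - (x + x^3/6 + 3*x^5/40 + 5*x^7/112) with hh
  set h' : ℝ → ℝ := fun x => 1 / Real.sqrt (1 - x^2) - (1 + x^2/2 + 3*x^4/8 + 5*x^6/16) with hh'
  have hderiv : ∀ x ∈ Icc (0:ℝ) u, HasDerivWithinAt h (h' x) (Icc 0 u) x := by
    intro x hx
    obtain ⟨hx0, hxu⟩ := hx
    have hx1 : x ≠ -1 := by intro h; linarith [h ▸ hx0]
    have hx1' : x ≠ 1 := by intro h; rw [h] at hxu; linarith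
    have ha := Real.hasDerivAt_arcsin hx1 hx1'
    have hp : HasDerivAt (fun x : ℝ => x + x^3/6 + 3*x^5/40 + 5*x^7/112)
        (1 + x^2/2 + 3*x^4/8 + 5*x^6/16) x := by
      have h3 := (hasDerivAt_pow 3 x).div_const 6
      have h5 := ((hasDerivAt_pow 5 x).const_mul 3).div_const 40
      have h7 := ((hasDerivAt_pow 7 x).const_mul 5).div_const 112
      convert ((hasDerivAt_id x).add h3).add ((h5).add h7) using 1
      · rfl
      · rfl
      · funext y; simp [id]; ring
      · push_cast; ring
    exact ((ha.sub hp).hasDerivWithinAt)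
  have hbound : ∀ x ∈ Icc (0:ℝ) u, ‖h' x‖ ≤ 2 * u^6 := by
    intro x hx
    obtain ⟨hx0, hxu⟩ := hx
    have h1 : |x| ≤ 1/2 := by rw [abs_of_nonneg hx0]; linarith
    have h2 := invsqrt_bound x h1
    have h3 : x^6 ≤ u^6 := by exact pow_le_pow_left₀ hx0 hxu 6
    calc ‖h' x‖ ≤ 2 * x^6 := h2
      _ ≤ 2 * u^6 := by linarith
  have := Convex.norm_image_sub_le_of_norm_hasDerivWithin_le hderiv hbound
    (convex_Icc 0 u) (left_mem_Icc.mpr hu0) (right_mem_Icc.mpr hu0)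
  have h0 : h 0 = 0 := by simp [hh]
  rw [h0, sub_zero, sub_zero] at this
  calc |h u| ≤ 2 * u^6 * ‖u‖ := this
    _ = 2 * u^7 := by rw [Real.norm_eq_abs, abs_of_nonneg hu0]; ring

noncomputable def OmegaLSVK (y : ℝ) : ℝ :=
  (2 / π) * (Real.sqrt (4 - y ^ 2) + y * Real.arcsin (y / 2))

lemma sqrt_quarter (t : ℝ) (h : 0 ≤ 4 - t^2) : Real.sqrt (1 - (t/2)^2) = Real.sqrt (4 - t^2) / 2 := by
  rw [show 1 - (t/2)^2 = (4 - t^2)/4 by ring, Real.sqrt_div h, show (4:ℝ) = 2^2 by norm_num,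
    Real.sqrt_sq (by norm_num : (0:ℝ) ≤ 2)]

lemma arcsin_shift (t : ℝ) (ht0 : 0 ≤ t) (ht2 : t ≤ 2) :
    Real.arcsin ((t^2 - 2)/2) = 2 * Real.arcsin (t/2) - π/2 := by
  have h1 : (0:ℝ) ≤ t/2 := by linarith
  have h2 : t/2 ≤ 1 := by linarith
  have ha0 : 0 ≤ Real.arcsin (t/2) := Real.arcsin_nonneg.mpr h1
  have ha2 : Real.arcsin (t/2) ≤ π/2 := Real.arcsin_le_pi_div_two _
  have hsin : Real.sin (2 * Real.arcsin (t/2) - π/2) = (t^2 - 2)/2 := by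
    rw [Real.sin_sub, Real.sin_pi_div_two, Real.cos_pi_div_two, Real.cos_two_mul,
      Real.cos_arcsin]
    have : Real.sqrt (1 - (t/2)^2) ^ 2 = 1 - (t/2)^2 :=
      Real.sq_sqrt (by nlinarith)
    rw [this]; ring
  rw [← hsin, Real.arcsin_sin (by linarith) (by linarith)]

lemma f_eq_g (t : ℝ) (ht0 : 0 ≤ t) (ht2 : t ≤ 2) :
    OmegaLSVK (t^2 - 2) + t^2 - 2 =
      (2/π) * (t * Real.sqrt (4 - t^2) + 2*(t^2 - 2) * Real.arcsin (t/2)) := by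
  have hsq : Real.sqrt (4 - (t^2-2)^2) = t * Real.sqrt (4 - t^2) := by
    rw [show 4 - (t^2-2)^2 = t^2 * (4 - t^2) by ring,
      Real.sqrt_mul (sq_nonneg t), Real.sqrt_sq ht0]
  rw [OmegaLSVK, hsq, arcsin_shift t ht0 ht2]
  have hpi : π ≠ 0 := Real.pi_ne_zero
  field_simp
  ring

lemma hasDerivAt_g (t : ℝ) (h4 : 0 < 4 - t^2) :
    HasDerivAt (fun t => t * Real.sqrt (4 - t^2) + 2*(t^2-2) * Real.arcsin (t/2))
      (4 * t * Real.arcsin (t/2)) t := by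
  have ht2 : t^2 < 4 := by linarith
  have htl : -2 < t := by nlinarith
  have htr : t < 2 := by nlinarith
  have hs0 : 0 < Real.sqrt (4 - t^2) := Real.sqrt_pos.mpr h4
  have hs2 : (Real.sqrt (4 - t^2))^2 = 4 - t^2 := Real.sq_sqrt h4.le
  have hinner : HasDerivAt (fun t : ℝ => 4 - t^2) (-(2*t)) t := by
    convert (hasDerivAt_pow 2 t).const_sub 4 using 1
    rfl
    rfl
    push_cast; ring
  have hsqrt : HasDerivAt (fun t : ℝ => Real.sqrt (4 - t^2)) (-(2*t) / (2 * Real.sqrt (4-t^2))) t :=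
    hinner.sqrt (by positivity)
  have h1 : HasDerivAt (fun t : ℝ => t * Real.sqrt (4 - t^2))
      (1 * Real.sqrt (4-t^2) + t * (-(2*t) / (2 * Real.sqrt (4-t^2)))) t :=
    (hasDerivAt_id t).mul hsqrt
  have harc : HasDerivAt (fun t : ℝ => Real.arcsin (t/2))
      (1 / Real.sqrt (1 - (t/2)^2) * (1/2)) t :=
    (Real.hasDerivAt_arcsin (by intro h; rw [div_eq_iff (by norm_num : (2:ℝ) ≠ 0)] at h; linarith)
      (by intro h; rw [div_eq_iff (by norm_num : (2:ℝ) ≠ 0)] at h; linarith)).comp t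
      ((hasDerivAt_id t).div_const 2)
  have h2 : HasDerivAt (fun t : ℝ => 2*(t^2-2)) (2*(2*t)) t := by
    convert ((hasDerivAt_pow 2 t).sub_const 2).const_mul 2 using 1
    rfl
    rfl
    push_cast; ring
  have h3 := h2.mul harc
  have htot := h1.add h3
  convert htot using 1
  rfl
  rfl
  rfl
  rw [sqrt_quarter t h4.le]
  field_simp
  nlinarith [hs2, hs0]

theorem OmegaLSVK_shift_taylor :
    (fun t => (OmegaLSVK (t ^ 2 - 2) + t ^ 2 - 2) -
        ((4 / (3 * π)) * t ^ 3 + (1 / (30 * π)) * t ^ 5 + (3 / (1120 * π)) * t ^ 7))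
      =O[𝓝[Set.Ici (0 : ℝ)] 0] fun t => t ^ 9 := by
  have hpi : (0:ℝ) < π := Real.pi_pos
  have hpi3 : (3:ℝ) < π := Real.pi_gt_three
  set G : ℝ → ℝ := fun t => (2/π) * (t * Real.sqrt (4 - t^2) + 2*(t^2 - 2) * Real.arcsin (t/2)) -
      ((4 / (3 * π)) * t ^ 3 + (1 / (30 * π)) * t ^ 5 + (3 / (1120 * π)) * t ^ 7) with hG
  set G' : ℝ → ℝ := fun x => (2/π) * (4 * x * Real.arcsin (x/2)) -
      ((4 / (3 * π)) * (3*x^2) + (1 / (30 * π)) * (5*x^4) + (3 / (1120 * π)) * (7*x^6)) with hG'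
  have hGderiv : ∀ x, 0 < 4 - x^2 → HasDerivAt G (G' x) x := by
    intro x h4
    have hp : HasDerivAt (fun x : ℝ => (4 / (3 * π)) * x ^ 3 + (1 / (30 * π)) * x ^ 5 +
        (3 / (1120 * π)) * x ^ 7)
        ((4 / (3 * π)) * (3*x^2) + (1 / (30 * π)) * (5*x^4) + (3 / (1120 * π)) * (7*x^6)) x := by
      convert (((hasDerivAt_pow 3 x).const_mul (4/(3*π))).add
        ((hasDerivAt_pow 5 x).const_mul (1/(30*π)))).add
        ((hasDerivAt_pow 7 x).const_mul (3/(1120*π))) using 1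
      rfl
      rfl
      rfl
      all_goals push_cast; ring
    exact (((hasDerivAt_g x h4).const_mul (2/π)).sub hp)
  have hGbound : ∀ t ∈ Icc (0:ℝ) (1/2), ∀ x ∈ Icc (0:ℝ) t, ‖G' x‖ ≤ t^8 := by
    intro t ht x hx
    obtain ⟨hx0, hxt⟩ := hx
    have hxh : x ≤ 1/2 := le_trans hxt ht.2
    have hu : x/2 ∈ Icc (0:ℝ) (1/2) := ⟨by linarith, by linarith⟩
    have he := arcsin_taylor_bound (x/2) hu
    set e : ℝ := Real.arcsin (x/2) - (x/2 + (x/2)^3/6 + 3*(x/2)^5/40 + 5*(x/2)^7/112) with hee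
    have hGx : G' x = (8*x/π) * e + 5*x^8/(1792*π) := by
      rw [hG', hee]
      field_simp
      ring
    have habs : |G' x| ≤ (8*x/π) * (2*(x/2)^7) + 5*x^8/(1792*π) := by
      rw [hGx]
      refine le_trans (abs_add_le _ _) ?_
      gcongr
      · rw [abs_mul, abs_of_nonneg (by positivity : (0:ℝ) ≤ 8*x/π)]
        exact mul_le_mul_of_nonneg_left he (by positivity)
      · rw [abs_of_nonneg (by positivity)]
    have hx8 : x^8 ≤ t^8 := pow_le_pow_left₀ hx0 hxt 8
    calc ‖G' x‖ ≤ (8*x/π) * (2*(x/2)^7) + 5*x^8/(1792*π) := habs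
      _ = (1/8 + 5/1792) * x^8 / π := by ring
      _ ≤ x^8 := by
          rw [div_le_iff₀ hpi]
          nlinarith [pow_nonneg hx0 8]
      _ ≤ t^8 := hx8
  rw [Asymptotics.isBigO_iff]
  refine ⟨1, ?_⟩
  filter_upwards [Icc_mem_nhdsGE_of_mem (by constructor <;> norm_num : (0:ℝ) ∈ Ico (0:ℝ) (1/2))]
    with t ht
  obtain ⟨ht0, ht2⟩ := ht
  have hfg : OmegaLSVK (t^2 - 2) + t^2 - 2 =
      (2/π) * (t * Real.sqrt (4 - t^2) + 2*(t^2 - 2) * Real.arcsin (t/2)) :=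
    f_eq_g t ht0 (by linarith)
  have hmvt := Convex.norm_image_sub_le_of_norm_hasDerivWithin_le
    (f := G) (f' := G') (s := Icc 0 t) (C := t^8)
    (fun x hx => (hGderiv x (by nlinarith [hx.1, hx.2] : 0 < 4 - x^2)).hasDerivWithinAt)
    (hGbound t ⟨ht0, ht2⟩) (convex_Icc 0 t) (left_mem_Icc.mpr ht0) (right_mem_Icc.mpr ht0)
  have hG0 : G 0 = 0 := by
    simp [hG, Real.arcsin_zero]
  rw [hG0, sub_zero, sub_zero] at hmvt
  have : (OmegaLSVK (t ^ 2 - 2) + t ^ 2 - 2) -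
      ((4 / (3 * π)) * t ^ 3 + (1 / (30 * π)) * t ^ 5 + (3 / (1120 * π)) * t ^ 7) = G t := by
    simp only [hG]; rw [← hfg]
  rw [this]
  calc ‖G t‖ ≤ t^8 * ‖t‖ := hmvt
    _ = t^9 := by rw [Real.norm_eq_abs, abs_of_nonneg ht0]; ring
    _ ≤ 1 * ‖t^9‖ := by rw [one_mul, Real.norm_eq_abs]; exact le_abs_self _
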